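/- Let a, b ∈ SL₂(ℝ) be hyperbolic elements with disjoint translation axes in the same direction, and let d > 0 be the distance between their axes. Then τ_a + τ_b < τ_{ab} ≤ τ_a + τ_b + 2d, where τ_g = 2 log λ₁(g) is the translation length. -/

import Mathlib

open Matrix UpperHalfPlane
open scoped MatrixGroups

/-- The translation length of `g ∈ SL(2,ℝ)` acting on the hyperbolic plane:
the infimum of the displacement `dist (g • z) z`. -/
noncomputable def transLen (g : SL(2, ℝ)) : ℝ := ⨅ z : ℍ, dist (g • z) z

/-- The translation axis of `g`: the set of points realizing the minimal displacement. -/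
noncomputable def axisSet (g : SL(2, ℝ)) : Set ℍ := {z : ℍ | dist (g • z) z = transLen g}

/-- The distance between the translation axes of `a` and `b`. -/
noncomputable def axisDist (a b : SL(2, ℝ)) : ℝ :=
  ⨅ (x : axisSet a) (y : axisSet b), dist (x : ℍ) (y : ℍ)

/-- `g` is a hyperbolic isometry iff `|tr g| > 2`. -/
def IsHyperbolic (g : SL(2, ℝ)) : Prop := 2 < |Matrix.trace (g : Matrix (Fin 2) (Fin 2) ℝ)|

/-- Determinant of two vectors in the plane. -/
def det2 (u v : Fin 2 → ℝ) : ℝ := u 0 * v 1 - u 1 * v 0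

/-- Positive cyclic orientation of three points of the circle `ℙ¹(ℝ) = ∂ℍ`, represented by
nonzero vectors of `ℝ²`; this is independent of the choice of representatives. -/
def posOrient (u v w : Fin 2 → ℝ) : Prop := 0 < det2 u v * det2 v w * det2 w u

/-- Four points of the circle `ℙ¹(ℝ)`, given by vector representatives, are cyclically
ordered in the order `(u, v, w, z)` (for one of the two orientations). -/
def cyc4 (u v w z : Fin 2 → ℝ) : Prop :=
  (posOrient u v w ∧ posOrient u w z) ∨ (posOrient z w v ∧ posOrient z v u)

/-- Two hyperbolic elements `a, b` are *in the same direction*: their repelling/attracting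
fixed points on the boundary circle (identified with the eigenlines of the corresponding
eigenvectors) are cyclically ordered as `(x_a⁻, x_a⁺, x_b⁺, x_b⁻)`. -/
def SameDirection (a b : SL(2, ℝ)) : Prop :=
  ∃ (uaP uaM ubP ubM : Fin 2 → ℝ) (αa βa αb βb : ℝ),
    uaP ≠ 0 ∧ uaM ≠ 0 ∧ ubP ≠ 0 ∧ ubM ≠ 0 ∧
    (a : Matrix (Fin 2) (Fin 2) ℝ) *ᵥ uaP = αa • uaP ∧ 1 < |αa| ∧
    (a : Matrix (Fin 2) (Fin 2) ℝ) *ᵥ uaM = βa • uaM ∧ |βa| < 1 ∧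
    (b : Matrix (Fin 2) (Fin 2) ℝ) *ᵥ ubP = αb • ubP ∧ 1 < |αb| ∧
    (b : Matrix (Fin 2) (Fin 2) ℝ) *ᵥ ubM = βb • ubM ∧ |βb| < 1 ∧
    cyc4 uaM uaP ubP ubM

noncomputable def diagSL (l : ℝ) (hl : l ≠ 0) : SL(2, ℝ) :=
  ⟨!![l, 0; 0, l⁻¹], by simp [Matrix.det_fin_two_of]; field_simp⟩

lemma diagSL_smul_coe (l : ℝ) (hl : l ≠ 0) (z : ℍ) :
    ((diagSL l hl • z : ℍ) : ℂ) = (l ^ 2 : ℝ) * (z : ℂ) := by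
  rw [UpperHalfPlane.specialLinearGroup_apply, UpperHalfPlane.coe_mk]
  simp only [diagSL, Matrix.SpecialLinearGroup.coe_mk, Matrix.cons_val', Matrix.cons_val_zero,
    Matrix.cons_val_one, Matrix.head_cons, Matrix.head_fin_const, Matrix.empty_val',
    Matrix.cons_val_fin_one, Algebra.algebraMap_self_apply, Matrix.of_apply]
  push_cast
  have : (l : ℂ) ≠ 0 := by exact_mod_cast hl
  field_simp
  ring

lemma diagSL_dist (l : ℝ) (hl : l ≠ 0) (hl2 : 1 < |l|) (z : ℍ) :
    dist (diagSL l hl • z) z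
      = 2 * Real.arsinh ((l ^ 2 - 1) * ‖(z : ℂ)‖ / (2 * |l| * z.im)) := by
  have him : (diagSL l hl • z).im = l ^ 2 * z.im := by
    rw [UpperHalfPlane.im, diagSL_smul_coe l hl z]
    simp [Complex.mul_im, ← Complex.ofReal_pow]
  rw [UpperHalfPlane.dist_eq]
  congr 1
  rw [diagSL_smul_coe l hl z, him]
  have h1 : ((l ^ 2 : ℝ) : ℂ) * z - z = ((l ^ 2 - 1 : ℝ) : ℂ) * z := by push_cast; ring
  rw [Complex.dist_eq, h1, norm_mul]
  have h2 : l ^ 2 * z.im * z.im = (|l| * z.im) ^ 2 := by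
    rw [mul_pow, sq_abs]; ring
  rw [h2, Real.sqrt_sq (by positivity : (0:ℝ) ≤ |l| * z.im)]
  have h4 : (1:ℝ) < l ^ 2 := by nlinarith [abs_nonneg l, sq_abs l]
  rw [Complex.norm_real, Real.norm_eq_abs, abs_of_pos (by linarith : (0:ℝ) < l ^ 2 - 1)]
  ring_nf

lemma arsinh_half (L : ℝ) (hL : 1 < L) :
    2 * Real.arsinh ((L - L⁻¹) / 2) = 2 * Real.log L := by
  rw [← Real.sinh_log (by linarith : (0:ℝ) < L), Real.arsinh_sinh]

lemma diagSL_dist_ge (l : ℝ) (hl : l ≠ 0) (hl2 : 1 < |l|) (z : ℍ) :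
    2 * Real.log |l| ≤ dist (diagSL l hl • z) z := by
  rw [diagSL_dist l hl hl2 z, ← arsinh_half |l| hl2]
  have h4 : (0:ℝ) < l ^ 2 - 1 := by nlinarith [abs_nonneg l, sq_abs l]
  have him : z.im ≤ ‖(z : ℂ)‖ := le_trans (le_abs_self _) (Complex.abs_im_le_norm _)
  have h5 : (|l| - |l|⁻¹) / 2 ≤ (l ^ 2 - 1) * ‖(z : ℂ)‖ / (2 * |l| * z.im) := by
    rw [div_le_div_iff₀ (by norm_num) (by positivity)]
    have h6 : |l| * |l| = l ^ 2 := by rw [← sq_abs]; ring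
    have h7 : |l|⁻¹ * |l| = 1 := inv_mul_cancel₀ (by positivity)
    have key : (|l| - |l|⁻¹) * (2 * |l| * z.im) = (l ^ 2 - 1) * (2 * z.im) := by
      linear_combination (2 * z.im) * h6 - (2 * z.im) * h7
    nlinarith [z.im_pos, mul_le_mul_of_nonneg_left him (le_of_lt h4)]
  exact mul_le_mul_of_nonneg_left (Real.arsinh_le_arsinh.2 h5) (by norm_num)

lemma diagSL_dist_I (l : ℝ) (hl : l ≠ 0) (hl2 : 1 < |l|) :
    dist (diagSL l hl • UpperHalfPlane.I) UpperHalfPlane.I = 2 * Real.log |l| := by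
  rw [diagSL_dist l hl hl2, ← arsinh_half |l| hl2]
  have h1 : ‖(UpperHalfPlane.I : ℂ)‖ = 1 := by
    simp [UpperHalfPlane.I]
  have h2 : (UpperHalfPlane.I : ℍ).im = 1 := by
    simp [UpperHalfPlane.I, UpperHalfPlane.im]
  rw [h1, h2]
  congr 1
  have h6 : |l| * |l| = l ^ 2 := by rw [← sq_abs]; ring
  field_simp
  rw [sq_abs]

lemma transLen_diagSL (l : ℝ) (hl : l ≠ 0) (hl2 : 1 < |l|) :
    transLen (diagSL l hl) = 2 * Real.log |l| := by
  refine le_antisymm ?_ ?_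
  · exact le_trans (ciInf_le ⟨0, by rintro x ⟨z, rfl⟩; exact dist_nonneg⟩ UpperHalfPlane.I)
      (le_of_eq (diagSL_dist_I l hl hl2))
  · exact le_ciInf fun z => diagSL_dist_ge l hl hl2 z

lemma I_mem_axisSet_diagSL (l : ℝ) (hl : l ≠ 0) (hl2 : 1 < |l|) :
    UpperHalfPlane.I ∈ axisSet (diagSL l hl) := by
  simp only [axisSet, Set.mem_setOf_eq, transLen_diagSL l hl hl2, diagSL_dist_I l hl hl2]

lemma conj_dist (g h : SL(2, ℝ)) (w : ℍ) :
    dist ((g * h * g⁻¹) • (g • w)) (g • w) = dist (h • w) w := by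
  have e : (g * h * g⁻¹) • (g • w) = g • (h • w) := by
    rw [mul_smul, mul_smul, inv_smul_smul]
  rw [e, dist_smul]

lemma transLen_conj (g h : SL(2, ℝ)) : transLen (g * h * g⁻¹) = transLen h := by
  unfold transLen
  rw [← sInf_range, ← sInf_range]
  congr 1
  ext r
  constructor
  · rintro ⟨z, rfl⟩
    refine ⟨g⁻¹ • z, ?_⟩
    have := conj_dist g h (g⁻¹ • z)
    rw [smul_inv_smul] at this
    exact this.symm
  · rintro ⟨w, rfl⟩
    exact ⟨g • w, conj_dist g h w⟩

lemma axisSet_conj_mem (g h : SL(2, ℝ)) (w : ℍ) (hw : w ∈ axisSet h) :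
    (g • w) ∈ axisSet (g * h * g⁻¹) := by
  simp only [axisSet, Set.mem_setOf_eq] at hw ⊢
  rw [conj_dist g h w, transLen_conj g h, hw]

def det2' (u v : Fin 2 → ℝ) : ℝ := u 0 * v 1 - u 1 * v 0

lemma mulVec_comp (M : Matrix (Fin 2) (Fin 2) ℝ) (u : Fin 2 → ℝ) (i : Fin 2) :
    (M *ᵥ u) i = M i 0 * u 0 + M i 1 * u 1 := by
  simp [Matrix.mulVec, dotProduct, Fin.sum_univ_two]

lemma det2'_mulVec (M : Matrix (Fin 2) (Fin 2) ℝ) (u v : Fin 2 → ℝ) :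
    det2' (M *ᵥ u) (M *ᵥ v) = M.det * det2' u v := by
  simp only [det2', mulVec_comp, Matrix.det_fin_two]
  ring

lemma eigen_det2'_ne (M : Matrix (Fin 2) (Fin 2) ℝ) (u v : Fin 2 → ℝ) (α β : ℝ)
    (hu : u ≠ 0) (hv : v ≠ 0) (h1 : M *ᵥ u = α • u) (h2 : M *ᵥ v = β • v)
    (hαβ : α ≠ β) : det2' u v ≠ 0 := by
  intro hd
  simp only [det2'] at hd
  obtain ⟨c, hc⟩ : ∃ c : ℝ, v = c • u := by
    by_cases h0 : u 0 = 0
    · have h1' : u 1 ≠ 0 := by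
        intro h1'
        apply hu
        funext j; fin_cases j <;> simp [h0, h1']
      refine ⟨v 1 / u 1, funext fun j => ?_⟩
      fin_cases j
      · have hv0 : v 0 = 0 := by
          rcases mul_eq_zero.1 (by rw [h0] at hd; linarith : u 1 * v 0 = 0) with h | h
          · exact absurd h h1'
          · exact h
        simp [hv0, h0]
      · simp only [Pi.smul_apply, smul_eq_mul, Fin.mk_one, Fin.zero_eta]
        field_simp
    · refine ⟨v 0 / u 0, funext fun j => ?_⟩
      fin_cases j
      · simp only [Pi.smul_apply, smul_eq_mul, Fin.mk_one, Fin.zero_eta]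
        field_simp
      · simp only [Pi.smul_apply, smul_eq_mul, Fin.mk_one, Fin.zero_eta]
        field_simp
        nlinarith [hd]
  have h3 : β • v = α • v := by
    rw [hc] at h2 ⊢
    rw [Matrix.mulVec_smul, h1] at h2
    rw [← h2, smul_comm]
  have h4 : (β - α) • v = 0 := by rw [sub_smul, h3, sub_self]
  rcases smul_eq_zero.1 h4 with h | h
  · exact hαβ (sub_eq_zero.1 h).symm
  · exact hv h

lemma eigen_basic (g : SL(2, ℝ)) (u v : Fin 2 → ℝ) (α β : ℝ)
    (hu : u ≠ 0) (hv : v ≠ 0)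
    (h1 : (g : Matrix (Fin 2) (Fin 2) ℝ) *ᵥ u = α • u)
    (h2 : (g : Matrix (Fin 2) (Fin 2) ℝ) *ᵥ v = β • v)
    (hα : 1 < |α|) (hβ : |β| < 1) :
    α * β = 1 ∧ det2' u v ≠ 0 := by
  have hαβ : α ≠ β := by
    intro h; rw [h] at hα; linarith
  have hδ : det2' u v ≠ 0 := eigen_det2'_ne _ u v α β hu hv h1 h2 hαβ
  have hdet : det2' ((g : Matrix (Fin 2) (Fin 2) ℝ) *ᵥ u) ((g : Matrix (Fin 2) (Fin 2) ℝ) *ᵥ v)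
      = det2' u v := by
    rw [det2'_mulVec, g.det_coe, one_mul]
  rw [h1, h2] at hdet
  have : α * β * det2' u v = det2' u v := by
    simp only [det2', Pi.smul_apply, smul_eq_mul] at hdet ⊢
    linear_combination hdet
  constructor
  · have := mul_right_cancel₀ hδ (by rw [this, one_mul] : α * β * det2' u v = 1 * det2' u v)
    exact this
  · exact hδ

lemma transLen_eigen (g : SL(2, ℝ)) (u v : Fin 2 → ℝ) (α β : ℝ)
    (hu : u ≠ 0) (hv : v ≠ 0)
    (h1 : (g : Matrix (Fin 2) (Fin 2) ℝ) *ᵥ u = α • u)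
    (h2 : (g : Matrix (Fin 2) (Fin 2) ℝ) *ᵥ v = β • v)
    (hα : 1 < |α|) (hβ : |β| < 1) :
    transLen g = 2 * Real.log |α| ∧ (axisSet g).Nonempty := by
  obtain ⟨hmul, hδ⟩ := eigen_basic g u v α β hu hv h1 h2 hα hβ
  have hα0 : α ≠ 0 := by intro h; rw [h] at hα; simp at hα; linarith
  set δ := det2' u v with hδdef
  have hPdet : Matrix.det !![u 0, v 0 / δ; u 1, v 1 / δ] = 1 := by
    rw [Matrix.det_fin_two_of]
    simp only [det2'] at hδdef
    field_simp
    linarith [hδdef]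
  set P : SL(2, ℝ) := ⟨!![u 0, v 0 / δ; u 1, v 1 / δ], hPdet⟩ with hPdef
  have eu : ∀ i, (g : Matrix (Fin 2) (Fin 2) ℝ) i 0 * u 0
      + (g : Matrix (Fin 2) (Fin 2) ℝ) i 1 * u 1 = α * u i := by
    intro i
    have := congrFun h1 i
    rw [mulVec_comp] at this
    simpa using this
  have ev : ∀ i, (g : Matrix (Fin 2) (Fin 2) ℝ) i 0 * v 0
      + (g : Matrix (Fin 2) (Fin 2) ℝ) i 1 * v 1 = β * v i := by
    intro i
    have := congrFun h2 i
    rw [mulVec_comp] at this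
    simpa using this
  have hβα : β = α⁻¹ := by
    field_simp
    linear_combination hmul
  have key : g * P = P * diagSL α hα0 := by
    apply Subtype.ext
    rw [Matrix.SpecialLinearGroup.coe_mul, Matrix.SpecialLinearGroup.coe_mul]
    have hP0 : ∀ k, (P : Matrix (Fin 2) (Fin 2) ℝ) k 0 = u k := by
      intro k; fin_cases k <;> simp [hPdef]
    have hP1 : ∀ k, (P : Matrix (Fin 2) (Fin 2) ℝ) k 1 = v k / δ := by
      intro k; fin_cases k <;> simp [hPdef]
    have hD : ∀ k l, (diagSL α hα0 : Matrix (Fin 2) (Fin 2) ℝ) k l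
        = !![α, 0; 0, α⁻¹] k l := by
      intro k l; simp [diagSL]
    ext i j
    rw [Matrix.mul_apply, Fin.sum_univ_two, Matrix.mul_apply, Fin.sum_univ_two]
    fin_cases j
    · show (g : Matrix (Fin 2) (Fin 2) ℝ) i 0 * (P : Matrix (Fin 2) (Fin 2) ℝ) 0 0
          + (g : Matrix (Fin 2) (Fin 2) ℝ) i 1 * (P : Matrix (Fin 2) (Fin 2) ℝ) 1 0
          = (P : Matrix (Fin 2) (Fin 2) ℝ) i 0 * (diagSL α hα0 : Matrix (Fin 2) (Fin 2) ℝ) 0 0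
          + (P : Matrix (Fin 2) (Fin 2) ℝ) i 1 * (diagSL α hα0 : Matrix (Fin 2) (Fin 2) ℝ) 1 0
      rw [hP0 0, hP0 1, hP0 i, hP1 i, hD 0 0, hD 1 0]
      norm_num
      linarith [eu i]
    · show (g : Matrix (Fin 2) (Fin 2) ℝ) i 0 * (P : Matrix (Fin 2) (Fin 2) ℝ) 0 1
          + (g : Matrix (Fin 2) (Fin 2) ℝ) i 1 * (P : Matrix (Fin 2) (Fin 2) ℝ) 1 1
          = (P : Matrix (Fin 2) (Fin 2) ℝ) i 0 * (diagSL α hα0 : Matrix (Fin 2) (Fin 2) ℝ) 0 1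
          + (P : Matrix (Fin 2) (Fin 2) ℝ) i 1 * (diagSL α hα0 : Matrix (Fin 2) (Fin 2) ℝ) 1 1
      rw [hP1 0, hP1 1, hP0 i, hP1 i, hD 0 1, hD 1 1]
      norm_num
      have e : (g : Matrix (Fin 2) (Fin 2) ℝ) i 0 * (v 0 / δ)
          + (g : Matrix (Fin 2) (Fin 2) ℝ) i 1 * (v 1 / δ)
          = ((g : Matrix (Fin 2) (Fin 2) ℝ) i 0 * v 0
            + (g : Matrix (Fin 2) (Fin 2) ℝ) i 1 * v 1) / δ := by ring
      rw [e, ev i, hβα]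
      ring
  have hgconj : g = P * diagSL α hα0 * P⁻¹ := by
    rw [← key, mul_assoc, mul_inv_cancel, mul_one]
  constructor
  · rw [hgconj, transLen_conj, transLen_diagSL α hα0 hα]
  · refine ⟨P • UpperHalfPlane.I, ?_⟩
    rw [hgconj]
    exact axisSet_conj_mem P (diagSL α hα0) UpperHalfPlane.I (I_mem_axisSet_diagSL α hα0 hα)

lemma eigenvec_of_root (g : SL(2, ℝ)) (α : ℝ)
    (hchar : α ^ 2 - (Matrix.trace (g : Matrix (Fin 2) (Fin 2) ℝ)) * α + 1 = 0)
    (hα1 : |α| ≠ 1) :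
    ∃ u : Fin 2 → ℝ, u ≠ 0 ∧ (g : Matrix (Fin 2) (Fin 2) ℝ) *ᵥ u = α • u := by
  set M := (g : Matrix (Fin 2) (Fin 2) ℝ) with hM
  have hdet : M 0 0 * M 1 1 - M 0 1 * M 1 0 = 1 := by
    have := g.det_coe
    rwa [Matrix.det_fin_two] at this
  have htr : Matrix.trace M = M 0 0 + M 1 1 := Matrix.trace_fin_two M
  rw [htr] at hchar
  by_cases h1 : (![M 0 1, α - M 0 0] : Fin 2 → ℝ) = 0
  · -- use second candidate
    have e01 : M 0 1 = 0 := by simpa using congrFun h1 0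
    have e00 : α = M 0 0 := by
      have := congrFun h1 1
      simp at this
      linarith
    refine ⟨![α - M 1 1, M 1 0], ?_, ?_⟩
    · intro h2
      have f0 : α = M 1 1 := by
        have := congrFun h2 0
        simp at this
        linarith
      have f1 : M 1 0 = 0 := by simpa using congrFun h2 1
      rw [e01, f1] at hdet
      rw [← e00, ← f0] at hdet
      simp at hdet
      have h5 : |α| * |α| = 1 := by rw [← abs_mul, hdet, abs_one]
      rcases mul_self_eq_one_iff.1 h5 with h6 | h6
      · exact hα1 h6
      · nlinarith [abs_nonneg α]
    · funext i
      rw [mulVec_comp]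
      fin_cases i <;> simp <;> nlinarith [hchar, hdet]
  · refine ⟨![M 0 1, α - M 0 0], h1, ?_⟩
    funext i
    rw [mulVec_comp]
    fin_cases i <;> simp <;> nlinarith [hchar, hdet]

lemma exists_eigen_of_hyperbolic (g : SL(2, ℝ))
    (hg : 2 < |Matrix.trace (g : Matrix (Fin 2) (Fin 2) ℝ)|) :
    ∃ (u v : Fin 2 → ℝ) (α β : ℝ), u ≠ 0 ∧ v ≠ 0 ∧
      (g : Matrix (Fin 2) (Fin 2) ℝ) *ᵥ u = α • u ∧
      (g : Matrix (Fin 2) (Fin 2) ℝ) *ᵥ v = β • v ∧ 1 < |α| ∧ |β| < 1 ∧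
      |α| + |α|⁻¹ = |Matrix.trace (g : Matrix (Fin 2) (Fin 2) ℝ)| := by
  set T := Matrix.trace (g : Matrix (Fin 2) (Fin 2) ℝ) with hT
  have hT4 : 0 < T ^ 2 - 4 := by nlinarith [abs_nonneg T, sq_abs T]
  set s := Real.sqrt (T ^ 2 - 4) with hs
  have hs2 : s ^ 2 = T ^ 2 - 4 := Real.sq_sqrt (le_of_lt hT4)
  have hs0 : 0 < s := Real.sqrt_pos.2 hT4
  have hsT : s < |T| := by
    nlinarith [sq_abs T]
  -- the two roots
  obtain ⟨α, β, hsum, hprod, h1α⟩ :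
      ∃ α β : ℝ, α + β = T ∧ α * β = 1 ∧ 1 < |α| := by
    rcases lt_or_ge 0 T with hpos | hneg
    · refine ⟨(T + s) / 2, (T - s) / 2, by ring, by nlinarith, ?_⟩
      have : 2 < T := by rwa [abs_of_pos hpos] at hg
      have h2 : 1 < (T + s) / 2 := by nlinarith
      rw [abs_of_pos (by linarith)]
      exact h2
    · refine ⟨(T - s) / 2, (T + s) / 2, by ring, by nlinarith, ?_⟩
      have : T < -2 := by
        rcases abs_cases T with ⟨h, _⟩ | ⟨h, _⟩ <;> linarith
      have h2 : (T - s) / 2 < -1 := by nlinarith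
      rw [abs_of_neg (by linarith)]
      linarith
  have hα0 : α ≠ 0 := by
    intro h; rw [h] at h1α; simp at h1α; linarith
  have hβval : β = α⁻¹ := by
    field_simp; linear_combination hprod
  have hβ1 : |β| < 1 := by
    rw [hβval, abs_inv]
    rw [inv_lt_one_iff₀]
    right; exact h1α
  have hcharα : α ^ 2 - T * α + 1 = 0 := by
    rw [← hsum]; linear_combination -hprod
  have hcharβ : β ^ 2 - T * β + 1 = 0 := by
    rw [← hsum]; linear_combination -hprod
  obtain ⟨u, hu, huE⟩ := eigenvec_of_root g α hcharα (ne_of_gt h1α)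
  obtain ⟨v, hv, hvE⟩ := eigenvec_of_root g β hcharβ (ne_of_lt hβ1)
  refine ⟨u, v, α, β, hu, hv, huE, hvE, h1α, hβ1, ?_⟩
  have habsβ : |β| = |α|⁻¹ := by rw [hβval, abs_inv]
  rcases lt_trichotomy α 0 with hneg | hzero | hpos
  · have hβneg : β < 0 := by
      rw [hβval]
      exact inv_neg''.2 hneg
    have : T < 0 := by rw [← hsum]; linarith
    rw [abs_of_neg this, ← hsum, ← habsβ, abs_of_neg hneg, abs_of_neg hβneg]
    ring
  · exact absurd hzero hα0
  · have hβpos : 0 < β := by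
      rw [hβval]; positivity
    have : 0 < T := by rw [← hsum]; linarith
    rw [abs_of_pos this, ← hsum, ← habsβ, abs_of_pos hpos, abs_of_pos hβpos]

lemma trace_mul_formula (A B : Matrix (Fin 2) (Fin 2) ℝ) (u v x y : Fin 2 → ℝ)
    (αa βa αb βb : ℝ)
    (ha1 : A *ᵥ u = αa • u) (ha2 : A *ᵥ v = βa • v)
    (hb1 : B *ᵥ x = αb • x) (hb2 : B *ᵥ y = βb • y) :
    Matrix.trace (A * B) * (det2' u v * det2' x y)
      = det2' x v * det2' u y * (αa * αb + βa * βb)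
        - det2' y v * det2' u x * (αa * βb + αb * βa) := by
  have heu : ∀ i, A i 0 * u 0 + A i 1 * u 1 = αa * u i := fun i => by
    have := congrFun ha1 i; rw [mulVec_comp] at this; simpa using this
  have hev : ∀ i, A i 0 * v 0 + A i 1 * v 1 = βa * v i := fun i => by
    have := congrFun ha2 i; rw [mulVec_comp] at this; simpa using this
  have hbx : ∀ i, B i 0 * x 0 + B i 1 * x 1 = αb * x i := fun i => by
    have := congrFun hb1 i; rw [mulVec_comp] at this; simpa using this
  have hby : ∀ i, B i 0 * y 0 + B i 1 * y 1 = βb * y i := fun i => by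
    have := congrFun hb2 i; rw [mulVec_comp] at this; simpa using this
  set δa := det2' u v with hda
  set δb := det2' x y with hdb
  have hA00 : A 0 0 * δa = αa * u 0 * v 1 - βa * v 0 * u 1 := by
    simp only [hda, det2']; linear_combination v 1 * heu 0 - u 1 * hev 0
  have hA01 : A 0 1 * δa = (βa - αa) * (u 0 * v 0) := by
    simp only [hda, det2']; linear_combination u 0 * hev 0 - v 0 * heu 0
  have hA10 : A 1 0 * δa = (αa - βa) * (u 1 * v 1) := by
    simp only [hda, det2']; linear_combination v 1 * heu 1 - u 1 * hev 1
  have hA11 : A 1 1 * δa = βa * u 0 * v 1 - αa * u 1 * v 0 := by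
    simp only [hda, det2']; linear_combination u 0 * hev 1 - v 0 * heu 1
  have hB00 : B 0 0 * δb = αb * x 0 * y 1 - βb * y 0 * x 1 := by
    simp only [hdb, det2']; linear_combination y 1 * hbx 0 - x 1 * hby 0
  have hB01 : B 0 1 * δb = (βb - αb) * (x 0 * y 0) := by
    simp only [hdb, det2']; linear_combination x 0 * hby 0 - y 0 * hbx 0
  have hB10 : B 1 0 * δb = (αb - βb) * (x 1 * y 1) := by
    simp only [hdb, det2']; linear_combination y 1 * hbx 1 - x 1 * hby 1
  have hB11 : B 1 1 * δb = βb * x 0 * y 1 - αb * x 1 * y 0 := by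
    simp only [hdb, det2']; linear_combination x 0 * hby 1 - y 0 * hbx 1
  have htr : Matrix.trace (A * B)
      = A 0 0 * B 0 0 + A 0 1 * B 1 0 + A 1 0 * B 0 1 + A 1 1 * B 1 1 := by
    rw [Matrix.trace_fin_two]
    rw [Matrix.mul_apply, Matrix.mul_apply, Fin.sum_univ_two, Fin.sum_univ_two]
    ring
  rw [htr]
  simp only [det2']
  linear_combination (B 0 0 * δb) * hA00 + (αa * u 0 * v 1 - βa * v 0 * u 1) * hB00
    + (B 1 0 * δb) * hA01 + ((βa - αa) * (u 0 * v 0)) * hB10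
    + (B 0 1 * δb) * hA10 + ((αa - βa) * (u 1 * v 1)) * hB01
    + (B 1 1 * δb) * hA11 + (βa * u 0 * v 1 - αa * u 1 * v 0) * hB11


lemma one_lt_sq_of_abs (x : ℝ) (h : 1 < |x|) : 1 < x ^ 2 := by
  nlinarith [sq_abs x, abs_nonneg x]

lemma two_lt_add_inv (y : ℝ) (h : 1 < y) : 2 < y + y⁻¹ := by
  have hy : 0 < y := lt_trans one_pos h
  have e : (y + y⁻¹ - 2) * y = (y - 1) ^ 2 := by field_simp; ring
  nlinarith [sq_nonneg (y - 1), mul_pos hy hy]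

lemma lt_of_add_inv_lt (x y : ℝ) (hx : 1 < x) (hy : 1 < y)
    (h : x + x⁻¹ < y + y⁻¹) : x < y := by
  by_contra hcon
  push_neg at hcon
  have hxp : 0 < x := lt_trans one_pos hx
  have hyp : 0 < y := lt_trans one_pos hy
  have hfact : (y - x) * (y * x - 1) ≤ 0 :=
    mul_nonpos_of_nonpos_of_nonneg (by linarith) (by nlinarith)
  have e : (y + y⁻¹ - x - x⁻¹) * (y * x) = (y - x) * (y * x - 1) := by
    field_simp; ring
  nlinarith [mul_pos hyp hxp]

lemma abs_add_inv_lt (T u : ℝ) (hu0 : u ≠ 0) (h : u ^ 2 + 1 < T * u) :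
    |u| + |u|⁻¹ < |T| := by
  have hup : 0 < |u| := abs_pos.2 hu0
  have h1 : u ^ 2 + 1 ≤ |T| * |u| := by
    rw [← abs_mul]
    exact le_trans (le_of_lt h) (le_abs_self _)
  have h2 : u ^ 2 + 1 ≠ |T| * |u| := by
    intro he
    nlinarith [le_abs_self (T * u), abs_mul T u]
  rw [← mul_lt_mul_iff_left₀ hup]
  have e1 : (|u| + |u|⁻¹) * |u| = u ^ 2 + 1 := by
    field_simp
    rw [sq_abs]
  rw [e1]
  exact lt_of_le_of_ne h1 h2


lemma det2_eq : det2 = det2' := rfl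

/-- For two hyperbolic isometries with disjoint axes in the same direction, at distance `d`:
`τ_a + τ_b < τ_{ab} ≤ τ_a + τ_b + 2d`. -/
theorem transLen_mul_bounds (a b : SL(2, ℝ)) (ha : IsHyperbolic a) (hb : IsHyperbolic b)
    (hdisj : axisSet a ∩ axisSet b = ∅) (hdir : SameDirection a b)
    (d : ℝ) (hd : d = axisDist a b) (hd0 : 0 < d) :
    transLen a + transLen b < transLen (a * b) ∧
      transLen (a * b) ≤ transLen a + transLen b + 2 * d := by
  obtain ⟨uaP, uaM, ubP, ubM, αa, βa, αb, βb, huaP, huaM, hubP, hubM,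
    haP, hαa, haM, hβa, hbP, hαb, hbM, hβb, hcyc⟩ := hdir
  obtain ⟨hprodA, hδa⟩ := eigen_basic a uaP uaM αa βa huaP huaM haP haM hαa hβa
  obtain ⟨hprodB, hδb⟩ := eigen_basic b ubP ubM αb βb hubP hubM hbP hbM hαb hβb
  obtain ⟨hτa, hax_a⟩ := transLen_eigen a uaP uaM αa βa huaP huaM haP haM hαa hβa
  obtain ⟨hτb, hax_b⟩ := transLen_eigen b ubP ubM αb βb hubP hubM hbP hbM hαb hβb
  constructor
  · -- lower bound
    have hαa0 : αa ≠ 0 := fun h => by rw [h] at hαa; simp at hαa; linarith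
    have hαb0 : αb ≠ 0 := fun h => by rw [h] at hαb; simp at hαb; linarith
    set A := (a : Matrix (Fin 2) (Fin 2) ℝ) with hA
    set B := (b : Matrix (Fin 2) (Fin 2) ℝ) with hB
    set d1 := det2' ubP uaM with hd1
    set d2 := det2' uaP ubM with hd2
    set d3 := det2' ubM uaM with hd3
    set d4 := det2' uaP ubP with hd4
    set Da := det2' uaP uaM with hDa
    set Db := det2' ubP ubM with hDb
    set T := Matrix.trace (A * B) with hTdef
    have hT : T * (Da * Db) = d1 * d2 * (αa * αb + βa * βb) - d3 * d4 * (αa * βb + αb * βa) :=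
      trace_mul_formula A B uaP uaM ubP ubM αa βa αb βb haP haM hbP hbM
    have hpl : d1 * d2 - d3 * d4 = Da * Db := by
      simp only [hd1, hd2, hd3, hd4, hDa, hDb, det2']; ring
    have hD0 : Da * Db ≠ 0 := mul_ne_zero hδa hδb
    -- sign condition from cyc4
    have hsign : 0 < d3 * d4 * (Da * Db) := by
      rcases hcyc with ⟨h1, h2⟩ | ⟨h1, h2⟩
      · simp only [posOrient, det2_eq] at h1 h2
        have e1 : det2' uaM uaP * det2' uaP ubP * det2' ubP uaM = -(Da * d4 * d1) := by
          simp only [hd1, hd4, hDa, det2']; ring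
        have e2 : det2' uaM ubP * det2' ubP ubM * det2' ubM uaM = -(d1 * Db * d3) := by
          simp only [hd1, hd3, hDb, det2']; ring
        rw [e1] at h1; rw [e2] at h2
        have hd1ne : d1 ≠ 0 := by
          intro h; rw [h] at h1; norm_num at h1
        nlinarith [mul_pos h1 h2, mul_self_pos.2 hd1ne]
      · simp only [posOrient, det2_eq] at h1 h2
        have e1 : det2' ubM ubP * det2' ubP uaP * det2' uaP ubM = Db * d4 * d2 := by
          simp only [hd2, hd4, hDb, det2']; ring
        have e2 : det2' ubM uaP * det2' uaP uaM * det2' uaM ubM = Da * d2 * d3 := by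
          simp only [hd2, hd3, hDa, det2']; ring
        rw [e1] at h1; rw [e2] at h2
        have hd2ne : d2 ≠ 0 := by
          intro h; rw [h] at h1; norm_num at h1
        nlinarith [mul_pos h1 h2, mul_self_pos.2 hd2ne]
    set u := αa * αb with hu
    have hu0 : u ≠ 0 := mul_ne_zero hαa0 hαb0
    have hu1 : 1 < |u| := by
      rw [hu, abs_mul]
      exact one_lt_mul (le_of_lt hαa) hαb
    have key1 : T * (Da * Db) * u = d1 * d2 * (u ^ 2 + 1) - d3 * d4 * (αa ^ 2 + αb ^ 2) := by
      linear_combination u * hT + (d1 * d2 * (αb * βb) - d3 * d4 * αb ^ 2) * hprodA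
        + (d1 * d2 - d3 * d4 * αa ^ 2) * hprodB
    have htpos : 0 < d3 * d4 / (Da * Db) := by
      have e1 : d3 * d4 / (Da * Db) = d3 * d4 * (Da * Db) / (Da * Db) ^ 2 := by
        field_simp
      rw [e1]
      exact div_pos hsign (by positivity)
    have hE : 0 < (u ^ 2 + 1) - (αa ^ 2 + αb ^ 2) := by
      have e : (u ^ 2 + 1) - (αa ^ 2 + αb ^ 2) = (αa ^ 2 - 1) * (αb ^ 2 - 1) := by
        rw [hu]; ring
      rw [e]
      exact mul_pos (by linarith [one_lt_sq_of_abs αa hαa])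
        (by linarith [one_lt_sq_of_abs αb hαb])
    have key2 : T * u * (Da * Db)
        = (u ^ 2 + 1) * (Da * Db) + d3 * d4 * ((u ^ 2 + 1) - (αa ^ 2 + αb ^ 2)) := by
      linear_combination key1 + (u ^ 2 + 1) * hpl
    have e3 : T * u - (u ^ 2 + 1)
        = d3 * d4 / (Da * Db) * ((u ^ 2 + 1) - (αa ^ 2 + αb ^ 2)) := by
      rw [div_mul_eq_mul_div, eq_div_iff hD0]
      linear_combination key2
    have hTu : u ^ 2 + 1 < T * u := by
      linarith [e3, mul_pos htpos hE]
    have hTabs : |u| + |u|⁻¹ < |T| := abs_add_inv_lt T u hu0 hTu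
    -- a*b is hyperbolic; get its eigen data
    have hTc : Matrix.trace ((↑(a * b) : Matrix (Fin 2) (Fin 2) ℝ)) = T := by
      rw [hTdef, Matrix.SpecialLinearGroup.coe_mul]
    have hhyp : 2 < |Matrix.trace ((↑(a * b) : Matrix (Fin 2) (Fin 2) ℝ))| := by
      rw [hTc]
      linarith [two_lt_add_inv |u| hu1, hTabs]
    obtain ⟨w1, w2, γ, γ', hw1, hw2, hE1, hE2, hγ, hγ', hγT⟩ :=
      exists_eigen_of_hyperbolic (a * b) hhyp
    obtain ⟨hτab, _⟩ := transLen_eigen (a * b) w1 w2 γ γ' hw1 hw2 hE1 hE2 hγ hγ'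
    rw [hTc] at hγT
    -- |γ| > |u|
    have hγu : |u| < |γ| := by
      apply lt_of_add_inv_lt |u| |γ| hu1 hγ
      rw [hγT]
      exact hTabs
    -- conclude
    rw [hτa, hτb, hτab]
    have hlog : Real.log |αa| + Real.log |αb| < Real.log |γ| := by
      rw [← Real.log_mul (by positivity) (by positivity)]
      apply Real.log_lt_log (by positivity)
      rw [← abs_mul, ← hu]
      exact hγu
    linarith
  · -- upper bound
    have hbdd : BddBelow (Set.range fun z : ℍ => dist ((a * b) • z) z) :=
      ⟨0, by rintro r ⟨z, rfl⟩; exact dist_nonneg⟩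
    have key : ∀ p ∈ axisSet a, ∀ q ∈ axisSet b,
        transLen (a * b) ≤ transLen a + transLen b + 2 * dist p q := by
      intro p hp q hq
      have h1 : transLen (a * b) ≤ dist ((a * b) • q) q := ciInf_le hbdd q
      have h2 : dist ((a * b) • q) q
          ≤ dist ((a * b) • q) (a • p) + dist (a • p) p + dist p q :=
        dist_triangle4 _ _ _ _
      have h3 : dist ((a * b) • q) (a • p) = dist (b • q) p := by
        rw [mul_smul, dist_smul]
      have h4 : dist (b • q) p ≤ dist (b • q) q + dist q p := dist_triangle _ _ _
      have h5 : dist (a • p) p = transLen a := hp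
      have h6 : dist (b • q) q = transLen b := hq
      have h7 : dist q p = dist p q := dist_comm _ _
      linarith
    have hne_a : Nonempty (axisSet a) := hax_a.to_subtype
    have hne_b : Nonempty (axisSet b) := hax_b.to_subtype
    have hle : (transLen (a * b) - transLen a - transLen b) / 2 ≤ axisDist a b := by
      refine le_ciInf fun x => le_ciInf fun y => ?_
      have := key x x.2 y y.2
      linarith
    rw [hd]
    linarith
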